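/- arXiv:1405.1339 — 4 statements merged into one kernel-verified Lean document; each statement's English description precedes it below -/
import Mathlib

section
/- Fix p_A ∈ (0,1) and cf₁ ∈ (0,1) with cf₁ > p_A. For p_X in an interval where p_A − p_X cf₁ > 0 and 1 − p_X − p_A + p_X cf₁ > 0, the function f(p_X) = p_X cf₁ ln(p_X cf₁) + p_X(1−cf₁)ln(p_X(1−cf₁)) + (p_A − p_X cf₁)ln(p_A − p_X cf₁) + (1 − p_X − p_A + p_X cf₁)ln(1 − p_X − p_A + p_X cf₁) − p_X ln p_X − (1−p_X)ln(1−p_X) is strictly increasing in p_X. -/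
theorem mi_confidence_line_increasing (pA cf₁ : ℝ)
    (hA : pA ∈ Set.Ioo (0:ℝ) 1) (hcf : cf₁ ∈ Set.Ioo (0:ℝ) 1) (hgt : pA < cf₁) :
    StrictMonoOn
      (fun pX : ℝ =>
        pX * cf₁ * Real.log (pX * cf₁) +
        pX * (1 - cf₁) * Real.log (pX * (1 - cf₁)) +
        (pA - pX * cf₁) * Real.log (pA - pX * cf₁) +
        (1 - pX - pA + pX * cf₁) * Real.log (1 - pX - pA + pX * cf₁) -
        pX * Real.log pX - (1 - pX) * Real.log (1 - pX))
      {pX : ℝ | 0 < pX ∧ pX < 1 ∧ 0 < pA - pX * cf₁ ∧ 0 < 1 - pX - pA + pX * cf₁} := by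
  obtain ⟨hA0, hA1⟩ := hA
  obtain ⟨hc0, hc1⟩ := hcf
  have hc1' : (0:ℝ) < 1 - cf₁ := by linarith
  set S : Set ℝ :=
    {pX : ℝ | 0 < pX ∧ pX < 1 ∧ 0 < pA - pX * cf₁ ∧ 0 < 1 - pX - pA + pX * cf₁} with hS
  set D : ℝ → ℝ := fun x =>
    cf₁ * Real.log cf₁ + (1 - cf₁) * Real.log (1 - cf₁) + Real.log (1 - x) -
      cf₁ * Real.log (pA - x * cf₁) - (1 - cf₁) * Real.log (1 - x - pA + x * cf₁) with hD
  -- the derivative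
  have key : ∀ x ∈ S, HasDerivAt
      (fun pX : ℝ =>
        pX * cf₁ * Real.log (pX * cf₁) +
        pX * (1 - cf₁) * Real.log (pX * (1 - cf₁)) +
        (pA - pX * cf₁) * Real.log (pA - pX * cf₁) +
        (1 - pX - pA + pX * cf₁) * Real.log (1 - pX - pA + pX * cf₁) -
        pX * Real.log pX - (1 - pX) * Real.log (1 - pX)) (D x) x := by
    rintro x ⟨hx0, hx1, ha, hb⟩
    have h1x : (0:ℝ) < 1 - x := by linarith
    have hi1 : HasDerivAt (fun p : ℝ => p * cf₁) cf₁ x := by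
      simpa using (hasDerivAt_id x).mul_const cf₁
    have hi2 : HasDerivAt (fun p : ℝ => p * (1 - cf₁)) (1 - cf₁) x := by
      simpa using (hasDerivAt_id x).mul_const (1 - cf₁)
    have hi3 : HasDerivAt (fun p : ℝ => pA - p * cf₁) (-cf₁) x := by
      simpa using ((hasDerivAt_id x).mul_const cf₁).const_sub pA
    have hi4 : HasDerivAt (fun p : ℝ => 1 - p - pA + p * cf₁) (cf₁ - 1) x := by
      have := (((hasDerivAt_const x (1:ℝ)).sub (hasDerivAt_id x)).sub
          (hasDerivAt_const x pA)).add ((hasDerivAt_id x).mul_const cf₁)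
      exact this.congr_deriv (by ring)
    have hi6 : HasDerivAt (fun p : ℝ => 1 - p) (-1 : ℝ) x := by
      simpa using (hasDerivAt_id x).const_sub (1:ℝ)
    have h1 : HasDerivAt (fun p : ℝ => p * cf₁ * Real.log (p * cf₁))
        ((Real.log (x * cf₁) + 1) * cf₁) x :=
      HasDerivAt.comp x (h₂ := fun p : ℝ => p * Real.log p) (Real.hasDerivAt_mul_log (mul_pos hx0 hc0).ne') hi1
    have h2 : HasDerivAt (fun p : ℝ => p * (1 - cf₁) * Real.log (p * (1 - cf₁)))
        ((Real.log (x * (1 - cf₁)) + 1) * (1 - cf₁)) x :=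
      HasDerivAt.comp x (h₂ := fun p : ℝ => p * Real.log p) (Real.hasDerivAt_mul_log (mul_pos hx0 hc1').ne') hi2
    have h3 : HasDerivAt (fun p : ℝ => (pA - p * cf₁) * Real.log (pA - p * cf₁))
        ((Real.log (pA - x * cf₁) + 1) * (-cf₁)) x :=
      HasDerivAt.comp x (h₂ := fun p : ℝ => p * Real.log p) (Real.hasDerivAt_mul_log ha.ne') hi3
    have h4 : HasDerivAt (fun p : ℝ =>
          (1 - p - pA + p * cf₁) * Real.log (1 - p - pA + p * cf₁))
        ((Real.log (1 - x - pA + x * cf₁) + 1) * (cf₁ - 1)) x :=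
      HasDerivAt.comp x (h₂ := fun p : ℝ => p * Real.log p) (Real.hasDerivAt_mul_log hb.ne') hi4
    have h5 : HasDerivAt (fun p : ℝ => p * Real.log p) (Real.log x + 1) x :=
      Real.hasDerivAt_mul_log hx0.ne'
    have h6 : HasDerivAt (fun p : ℝ => (1 - p) * Real.log (1 - p))
        ((Real.log (1 - x) + 1) * (-1)) x :=
      (Real.hasDerivAt_mul_log h1x.ne').comp x hi6
    have htot := ((((h1.add h2).add h3).add h4).sub h5).sub h6
    refine htot.congr_deriv ?_
    rw [hD, Real.log_mul hx0.ne' hc0.ne', Real.log_mul hx0.ne' hc1'.ne']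
    ring
  -- positivity of the derivative
  have pos : ∀ x ∈ S, 0 < D x := by
    rintro x ⟨hx0, hx1, ha, hb⟩
    have h1x : (0:ℝ) < 1 - x := by linarith
    set a := pA - x * cf₁ with hadef
    set b := 1 - x - pA + x * cf₁ with hbdef
    have hab : a + b = 1 - x := by rw [hadef, hbdef]; ring
    set u := a / (cf₁ * (1 - x)) with hudef
    set v := b / ((1 - cf₁) * (1 - x)) with hvdef
    have hu : 0 < u := div_pos ha (mul_pos hc0 h1x)
    have hv : 0 < v := div_pos hb (mul_pos hc1' h1x)
    have hsum : cf₁ * u + (1 - cf₁) * v = 1 := by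
      rw [hudef, hvdef]
      field_simp
      linear_combination (cf₁ * (1 - cf₁) * (1 - x)) * hab
    have hne : u ≠ v := by
      intro h
      rw [hudef, hvdef, div_eq_div_iff (mul_pos hc0 h1x).ne' (mul_pos hc1' h1x).ne'] at h
      rw [hadef, hbdef] at h
      nlinarith [mul_pos h1x (sub_pos.mpr hgt)]
    have hcc := strictConcaveOn_log_Ioi.2 (Set.mem_Ioi.mpr hu) (Set.mem_Ioi.mpr hv) hne
      hc0 hc1' (by ring)
    rw [smul_eq_mul, smul_eq_mul, smul_eq_mul, smul_eq_mul, hsum, Real.log_one] at hcc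
    have hlogu : Real.log u = Real.log a - Real.log cf₁ - Real.log (1 - x) := by
      rw [hudef, Real.log_div ha.ne' (mul_pos hc0 h1x).ne',
        Real.log_mul hc0.ne' h1x.ne']
      ring
    have hlogv : Real.log v = Real.log b - Real.log (1 - cf₁) - Real.log (1 - x) := by
      rw [hvdef, Real.log_div hb.ne' (mul_pos hc1' h1x).ne',
        Real.log_mul hc1'.ne' h1x.ne']
      ring
    have : D x = -(cf₁ * Real.log u + (1 - cf₁) * Real.log v) := by
      rw [hD, hlogu, hlogv]
      ring
    rw [this]
    linarith
  -- convexity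
  have hconv : Convex ℝ S := by
    rw [convex_iff_ordConnected]
    constructor
    rintro p ⟨hp0, hp1, hpa, hpb⟩ q ⟨hq0, hq1, hqa, hqb⟩ z ⟨hz1, hz2⟩
    refine ⟨by linarith, by linarith, ?_, ?_⟩
    · nlinarith [mul_le_mul_of_nonneg_right hz2 hc0.le]
    · nlinarith [mul_nonneg (sub_nonneg.mpr hz2) hc1'.le]
  exact strictMonoOn_of_hasDerivWithinAt_pos hconv
    (fun x hx => (key x hx).continuousAt.continuousWithinAt)
    (fun x hx => ((key x (interior_subset hx)).hasDerivWithinAt))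
    (fun x hx => pos x (interior_subset hx))
end

section
/- Fix p_A ∈ (0,1) and cf₂ ∈ (0,1) with cf₂ > p_A. For p_X in an interval where p_A − cf₂(1−p_X) > 0 and p_X(1−cf₂) − p_A + cf₂ > 0, the function f(p_X) = (p_A − cf₂(1−p_X))ln(p_A − cf₂(1−p_X)) + (p_X(1−cf₂) − p_A + cf₂)ln(p_X(1−cf₂) − p_A + cf₂) + cf₂(1−p_X)ln cf₂ + (1−p_X)(1−cf₂)ln(1−cf₂) − p_X ln p_X is strictly decreasing in p_X. -/
theorem mi_neg_confidence_line_decreasing (pA cf₂ : ℝ)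
    (hA : pA ∈ Set.Ioo (0:ℝ) 1) (hcf : cf₂ ∈ Set.Ioo (0:ℝ) 1) (hgt : pA < cf₂) :
    StrictAntiOn
      (fun pX : ℝ =>
        (pA - cf₂ * (1 - pX)) * Real.log (pA - cf₂ * (1 - pX)) +
        (pX * (1 - cf₂) - pA + cf₂) * Real.log (pX * (1 - cf₂) - pA + cf₂) +
        cf₂ * (1 - pX) * Real.log cf₂ +
        (1 - pX) * (1 - cf₂) * Real.log (1 - cf₂) -
        pX * Real.log pX)
      {pX : ℝ | 0 < pX ∧ pX < 1 ∧ 0 < pA - cf₂ * (1 - pX) ∧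
        0 < pX * (1 - cf₂) - pA + cf₂} := by
  obtain ⟨hA0, hA1⟩ := hA
  obtain ⟨hc0, hc1⟩ := hcf
  set ℓ : ℝ := 1 - pA / cf₂ with hℓdef
  have hℓ0 : 0 < ℓ := by
    have : pA / cf₂ < 1 := (div_lt_one hc0).mpr hgt
    rw [hℓdef]; linarith
  have hseteq : {pX : ℝ | 0 < pX ∧ pX < 1 ∧ 0 < pA - cf₂ * (1 - pX) ∧
      0 < pX * (1 - cf₂) - pA + cf₂} = Set.Ioo ℓ 1 := by
    ext p
    simp only [Set.mem_setOf_eq, Set.mem_Ioo]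
    constructor
    · rintro ⟨hp0, hp1, ha, -⟩
      refine ⟨?_, hp1⟩
      rw [hℓdef]
      have h2 : 1 - p < pA / cf₂ := (lt_div_iff₀ hc0).mpr (by nlinarith)
      linarith
    · rintro ⟨hl, hp1⟩
      have hp0 : 0 < p := lt_trans hℓ0 hl
      have ha : 0 < pA - cf₂ * (1 - p) := by
        have : ℓ < p := hl
        rw [hℓdef] at this
        have h2 : 1 - p < pA / cf₂ := by linarith
        have := (lt_div_iff₀ hc0).mp h2
        nlinarith
      refine ⟨hp0, hp1, ha, ?_⟩
      nlinarith
  rw [hseteq]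
  -- derivative of f at each point of the interval
  set f : ℝ → ℝ := fun pX : ℝ =>
        (pA - cf₂ * (1 - pX)) * Real.log (pA - cf₂ * (1 - pX)) +
        (pX * (1 - cf₂) - pA + cf₂) * Real.log (pX * (1 - cf₂) - pA + cf₂) +
        cf₂ * (1 - pX) * Real.log cf₂ +
        (1 - pX) * (1 - cf₂) * Real.log (1 - cf₂) -
        pX * Real.log pX with hfdef
  have key : ∀ x ∈ Set.Ioo ℓ 1, HasDerivAt f
      ((Real.log (pA - cf₂ * (1 - x)) + 1) * cf₂ +
       (Real.log (x * (1 - cf₂) - pA + cf₂) + 1) * (1 - cf₂) +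
       (-cf₂) * Real.log cf₂ + (-(1 - cf₂)) * Real.log (1 - cf₂) -
       (Real.log x + 1)) x := by
    intro x hx
    have hx' : x ∈ {pX : ℝ | 0 < pX ∧ pX < 1 ∧ 0 < pA - cf₂ * (1 - pX) ∧
        0 < pX * (1 - cf₂) - pA + cf₂} := by rw [hseteq]; exact hx
    obtain ⟨hx0, hx1, ha, hb⟩ := hx'
    have h1 : HasDerivAt (fun p : ℝ => pA - cf₂ * (1 - p)) cf₂ x := by
      have := (((hasDerivAt_id x).const_sub (1:ℝ)).const_mul cf₂).const_sub pA
      simpa using this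
    have h2 : HasDerivAt (fun p : ℝ => p * (1 - cf₂) - pA + cf₂) (1 - cf₂) x := by
      have := (((hasDerivAt_id x).mul_const (1 - cf₂)).sub_const pA).add_const cf₂
      simpa using this
    have g1 : HasDerivAt (fun p : ℝ => (pA - cf₂ * (1 - p)) * Real.log (pA - cf₂ * (1 - p)))
        ((Real.log (pA - cf₂ * (1 - x)) + 1) * cf₂) x :=
      by have := (Real.hasDerivAt_mul_log ha.ne').comp x h1; exact this
    have g2 : HasDerivAt (fun p : ℝ => (p * (1 - cf₂) - pA + cf₂) *
        Real.log (p * (1 - cf₂) - pA + cf₂))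
        ((Real.log (x * (1 - cf₂) - pA + cf₂) + 1) * (1 - cf₂)) x :=
      by have := (Real.hasDerivAt_mul_log hb.ne').comp x h2; exact this
    have g3 : HasDerivAt (fun p : ℝ => cf₂ * (1 - p) * Real.log cf₂)
        ((-cf₂) * Real.log cf₂) x := by
      have := (((hasDerivAt_id x).const_sub (1:ℝ)).const_mul cf₂).mul_const (Real.log cf₂)
      simpa using this
    have g4 : HasDerivAt (fun p : ℝ => (1 - p) * (1 - cf₂) * Real.log (1 - cf₂))
        ((-(1 - cf₂)) * Real.log (1 - cf₂)) x := by
      have := (((hasDerivAt_id x).const_sub (1:ℝ)).mul_const (1 - cf₂)).mul_const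
        (Real.log (1 - cf₂))
      simpa using this
    have g5 : HasDerivAt (fun p : ℝ => p * Real.log p) (Real.log x + 1) x :=
      Real.hasDerivAt_mul_log hx0.ne'
    exact ((((g1.add g2).add g3).add g4).sub g5)
  apply strictAntiOn_of_deriv_neg (convex_Ioo ℓ 1)
  · exact fun x hx => ((key x (by simpa using hx)).continuousAt).continuousWithinAt
  · intro x hx
    rw [interior_Ioo] at hx
    have hx' : x ∈ {pX : ℝ | 0 < pX ∧ pX < 1 ∧ 0 < pA - cf₂ * (1 - pX) ∧
        0 < pX * (1 - cf₂) - pA + cf₂} := by rw [hseteq]; exact hx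
    obtain ⟨hx0, hx1, ha, hb⟩ := hx'
    rw [(key x hx).deriv]
    -- concavity argument
    set a := pA - cf₂ * (1 - x) with hadef
    set b := x * (1 - cf₂) - pA + cf₂ with hbdef
    have hc1' : 0 < 1 - cf₂ := by linarith
    have hxmem : a / cf₂ ∈ Set.Ioi (0:ℝ) := by
      exact Set.mem_Ioi.mpr (div_pos ha hc0)
    have hymem : b / (1 - cf₂) ∈ Set.Ioi (0:ℝ) := by
      exact Set.mem_Ioi.mpr (div_pos hb hc1')
    have hne : a / cf₂ ≠ b / (1 - cf₂) := by
      intro h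
      rw [div_eq_div_iff hc0.ne' hc1'.ne'] at h
      rw [hadef, hbdef] at h
      nlinarith
    have hconc := strictConcaveOn_log_Ioi.2 hxmem hymem hne hc0 hc1' (by ring)
    have hsum : cf₂ • (a / cf₂) + (1 - cf₂) • (b / (1 - cf₂)) = x := by
      rw [smul_eq_mul, smul_eq_mul, mul_div_cancel₀ _ hc0.ne', mul_div_cancel₀ _ hc1'.ne']
      rw [hadef, hbdef]; ring
    rw [hsum] at hconc
    simp only [smul_eq_mul] at hconc
    rw [Real.log_div ha.ne' hc0.ne', Real.log_div hb.ne' hc1'.ne'] at hconc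
    nlinarith [hconc]
end

section
/- Let p_A ∈ (0,1) and consider the function F(p_X, p_{XA}) = (p_{XA} − p_X p_A)²/(p_X(1−p_X)) defined on the region D = { (p_X, p_{XA}) : 0 < p_X < 1, p_X·p_A ≤ p_{XA} ≤ min(p_X, p_A) } (positive dependence region). Then for any fixed c ∈ (0, p_A], F(p_X, p_{XA}) ≤ F(c, c) = c(1−p_A)²/(1−c) for all (p_X, p_{XA}) ∈ D with p_{XA} ≤ c. -/
theorem chi_sq_positive_upper_bound (pA : ℝ) (hA : pA ∈ Set.Ioo (0:ℝ) 1)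
    (c : ℝ) (hc : 0 < c) (hcA : c ≤ pA)
    (pX pXA : ℝ) (hX0 : 0 < pX) (hX1 : pX < 1)
    (hlo : pX * pA ≤ pXA) (hhi : pXA ≤ min pX pA) (hbound : pXA ≤ c) :
    (pXA - pX * pA) ^ 2 / (pX * (1 - pX)) ≤ c * (1 - pA) ^ 2 / (1 - c) := by
  obtain ⟨hA0, hA1⟩ := hA
  have h1 : pXA ≤ pX := le_trans hhi (min_le_left _ _)
  have h2 : pXA ≤ pA := le_trans hhi (min_le_right _ _)
  have hc1 : c < 1 := lt_of_le_of_lt hcA hA1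
  rw [div_le_div_iff₀ (by nlinarith) (by linarith)]
  rcases le_total pX c with hcase | hcase
  · have step1 : (pXA - pX*pA)^2 ≤ (pX*(1-pA))^2 := by nlinarith
    have step2 : (pX*(1-pA))^2 * (1-c) ≤ c*(1-pA)^2 * (pX*(1-pX)) := by
      have : pX * (1-c) ≤ c * (1-pX) := by nlinarith
      nlinarith [mul_nonneg (mul_nonneg hX0.le (sq_nonneg (1-pA))) (sub_nonneg.2 this)]
    nlinarith [step1, step2]
  · have hcpa : pX * pA ≤ c := le_trans hlo hbound
    have step1 : (pXA - pX*pA)^2 ≤ (c - pX*pA)^2 := by nlinarith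
    have step2 : (c - pX*pA)^2 * (1-c) ≤ c*(1-pA)^2 * (pX*(1-pX)) := by
      nlinarith [mul_nonneg (sub_nonneg.2 hcase) (sub_nonneg.2 hcpa),
        mul_nonneg (mul_nonneg (sub_nonneg.2 hcase) (sub_nonneg.2 hcpa)) (sub_nonneg.2 hcA),
        mul_pos hc (by linarith : (0:ℝ) < 1 - c), sq_nonneg (pX - c)]
    nlinarith [step1, step2, mul_pos hX0 (by linarith : (0:ℝ) < 1-pX)]
end

section
/- Let p_A ∈ (0,1) and F(p_X, p_{XA}) = (p_{XA} − p_X p_A)²/(p_X(1−p_X)) on the negative dependence region D' = { (p_X, p_{XA}) : 0 < p_X < 1, max(0, p_X − (1−p_A)) ≤ p_{XA} ≤ p_X·p_A }. Then for any fixed a ∈ (0, 1) with a ≤ p_X and b = p_{XA} such that the constraint region D'' = { (q_X, q_{XA}) ∈ D' : q_{XA} ≤ b, q_X ≤ q_{XA} + (a − b) } is considered, F attains its maximum over D'' at the point (a − b, 0), i.e., F(q_X, q_{XA}) ≤ F(a−b, 0) = (a−b)p_A²/(1−(a−b)) for all (q_X, q_{XA}) ∈ D''. -/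
lemma chi_sq_aux (pA c qX qXA : ℝ) (hpA0 : 0 < pA) (hpA1 : pA < 1)
    (hc0 : 0 < c) (hcub : c ≤ 1 - pA)
    (hq0 : 0 < qX) (hq1 : qX < 1) (hqA0 : 0 ≤ qXA)
    (hqhi : qXA ≤ qX * pA) (hqline : qX ≤ qXA + c) :
    (qXA - qX * pA) ^ 2 * (1 - c) ≤ c * pA ^ 2 * (qX * (1 - qX)) := by
  have hc1 : c < 1 := by linarith
  have hs : 0 ≤ c - qX * (1 - pA) := by nlinarith
  rcases le_total qX c with hcase | hcase
  · nlinarith [sq_nonneg (qXA - qX * pA), mul_nonneg hqA0 hqA0,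
      mul_nonneg (mul_nonneg hqA0 hq0.le) hpA0.le,
      mul_nonneg hqA0 (sub_nonneg.2 hqhi),
      mul_nonneg (sub_nonneg.2 hcase) (mul_nonneg (mul_nonneg hq0.le hpA0.le) hpA0.le)]
  · have ht : qX * pA - qXA ≤ c - qX * (1 - pA) := by linarith
    have ht0 : 0 ≤ qX * pA - qXA := by linarith
    have hK0 : 0 ≤ (1 - pA) ^ 2 * (1 - c) + c * pA ^ 2 := add_nonneg (mul_nonneg (sq_nonneg _) (by linarith : (0:ℝ) ≤ 1 - c)) (mul_nonneg hc0.le (sq_nonneg pA))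
    have hKr : 0 ≤ c * (1 - c) - ((1 - pA) ^ 2 * (1 - c) + c * pA ^ 2) * qX := by
      nlinarith [mul_nonneg hs hK0,
        mul_nonneg hc0.le (mul_nonneg hpA0.le (by linarith : (0:ℝ) ≤ 1 - pA - c))]
    have hid : c * pA ^ 2 * (qX * (1 - qX)) - (c - qX * (1 - pA)) ^ 2 * (1 - c) =
        (qX - c) * (c * (1 - c) - ((1 - pA) ^ 2 * (1 - c) + c * pA ^ 2) * qX) := by
      ring
    have key : (c - qX * (1 - pA)) ^ 2 * (1 - c) ≤ c * pA ^ 2 * (qX * (1 - qX)) := by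
      linarith only [mul_nonneg (sub_nonneg.2 hcase) hKr, hid.le, hid.ge]
    nlinarith [key, mul_nonneg (sub_nonneg.2 ht) ht0, mul_nonneg (sub_nonneg.2 ht) hs]

theorem chi_sq_negative_upper_bound (pA : ℝ) (hA : pA ∈ Set.Ioo (0:ℝ) 1)
    (a b : ℝ) (ha : a ∈ Set.Ioo (0:ℝ) 1) (hb0 : 0 ≤ b)
    (hneg : b ≤ a * pA) (hfeas : max 0 (a - (1 - pA)) ≤ b)
    (qX qXA : ℝ) (hq0 : 0 < qX) (hq1 : qX < 1)
    (hqlo : max 0 (qX - (1 - pA)) ≤ qXA) (hqhi : qXA ≤ qX * pA)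
    (hqb : qXA ≤ b) (hqline : qX ≤ qXA + (a - b)) :
    (qXA - qX * pA) ^ 2 / (qX * (1 - qX)) ≤ (a - b) * pA ^ 2 / (1 - (a - b)) := by
  obtain ⟨hpA0, hpA1⟩ := hA
  obtain ⟨ha0, ha1⟩ := ha
  have hqA0 : 0 ≤ qXA := le_trans (le_max_left _ _) hqlo
  have hfeas' : a - (1 - pA) ≤ b := le_trans (le_max_right _ _) hfeas
  have hcub : a - b ≤ 1 - pA := by linarith
  have hc0 : 0 < a - b := by nlinarith
  have hden : 0 < qX * (1 - qX) := mul_pos hq0 (by linarith)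
  have hden2 : 0 < 1 - (a - b) := by linarith
  rw [div_le_div_iff₀ hden hden2]
  exact chi_sq_aux pA (a - b) qX qXA hpA0 hpA1 hc0 hcub hq0 hq1 hqA0 hqhi hqline
end
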